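/- Let δ, A, B, C, D, E, F, G be complex numbers with δ ≠ 0 and G ≠ 0, satisfying the equations: F·G = −G·F; F·F = −1 − G²; F·F = E − G·D; F·E = −A; F·E = F − G·C; F·E = F + G·C; F·D = −G·B; F·D = C + G·F; F·D = −C + G·F; F·C = D + G·E; F·C = −D − G·E; F·C = −1/δ + E/δ − G·D/δ − G²/δ; F·B = 1/δ² + G·D; F·A = −E + G²/δ². Then F = 0, G² = −1, A = 0, B = 0, C = 0, E = −1/δ², and D = −1/(G·δ²). -/

import Mathlib

/-- Solving the coefficient-comparison system for the Yang–Baxter relation of a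
singly-generated planar algebra with non-self-contragredient generator. -/
theorem yb_coefficients_nonself (δ A B C D E F G : ℂ)
    (hδ : δ ≠ 0) (hG : G ≠ 0)
    (h16 : F * G = -(G * F))
    (h13 : F * F = -1 - G ^ 2)
    (h12 : F * F = E - G * D)
    (h10 : F * E = -A)
    (h9 : F * E = F - G * C)
    (h11 : F * E = F + G * C)
    (h7 : F * D = -(G * B))
    (h6 : F * D = C + G * F)
    (h8 : F * D = -C + G * F)
    (h3 : F * C = D + G * E)
    (h5 : F * C = -D - G * E)
    (h4 : F * C = -1 / δ + E / δ - G * D / δ - G ^ 2 / δ)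
    (h2 : F * B = 1 / δ ^ 2 + G * D)
    (h1 : F * A = -E + G ^ 2 / δ ^ 2) :
    F = 0 ∧ G ^ 2 = -1 ∧ A = 0 ∧ B = 0 ∧ C = 0 ∧
      E = -(1 / δ ^ 2) ∧ D = -(1 / (G * δ ^ 2)) := by
  have hF : F = 0 := by
    have h : G * (2 * F) = 0 := by linear_combination h16
    rcases mul_eq_zero.1 h with h' | h'
    · exact absurd h' hG
    · linear_combination h' / 2
  have hG2 : G ^ 2 = -1 := by linear_combination h13 - F * hF
  have hC : C = 0 := by
    have h : G * C = 0 := by linear_combination (h9 - h11) / 2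
    rcases mul_eq_zero.1 h with h' | h'
    · exact absurd h' hG
    · exact h'
  have hB : B = 0 := by
    have h : G * B = 0 := by linear_combination h7 - D * hF
    rcases mul_eq_zero.1 h with h' | h'
    · exact absurd h' hG
    · exact h'
  have hA : A = 0 := by linear_combination h10 - E * hF
  have hGD : G * D = -(1 / δ ^ 2) := by linear_combination -h2 + B * hF
  have hD : D = -G * E := by linear_combination -h3 + C * hF
  have hE : E = -(1 / δ ^ 2) := by linear_combination hGD - G * hD + E * hG2
  have hDval : D = -(1 / (G * δ ^ 2)) := by
    have hD2 : D = G / δ ^ 2 := by linear_combination hD - G * hE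
    rw [hD2]
    field_simp
    linear_combination hG2
  exact ⟨hF, hG2, hA, hB, hC, hE, hDval⟩
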